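/- Let γ > 0, 0 < δ ≤ 1, and 0 < ρ ≤ (1+δ)γ ≤ 2γ. Let A ∈ ℝ^{m×n}, and let Δp⁺ = Δp + ρ A Δu for vectors Δp ∈ ℝ^m, Δu ∈ ℝ^n. Suppose 2⟨Δp, AΔu⟩ ≤ -2‖Δu‖²_H + ‖Δu'‖²_{H̄} + ‖Δu‖²_{H̄} where H̄ = H - γA^T A ⪰ 0 and H symmetric. Then ‖Δu‖²_{H̄} + (1/ρ)‖Δp⁺‖² ≤ ‖Δu'‖²_{H̄} + (1/ρ)‖Δp‖². -/

import Mathlib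

open Matrix

theorem stmt_18 {m n : ℕ} (γ δ ρ : ℝ) (hγ : 0 < γ) (hδ0 : 0 < δ) (hδ1 : δ ≤ 1)
    (hρ0 : 0 < ρ) (hρ1 : ρ ≤ (1 + δ) * γ) (hρ2 : (1 + δ) * γ ≤ 2 * γ)
    (A : Matrix (Fin m) (Fin n) ℝ) (H : Matrix (Fin n) (Fin n) ℝ)
    (hH : H.IsHermitian)
    (Δp : Fin m → ℝ) (Δu Δu' : Fin n → ℝ)
    (Hbar : Matrix (Fin n) (Fin n) ℝ) (hHbar : Hbar = H - γ • (Aᵀ * A))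
    (hpsd : Hbar.PosSemidef)
    (hkey : 2 * (Δp ⬝ᵥ A.mulVec Δu) ≤
      -2 * (Δu ⬝ᵥ H.mulVec Δu) + Δu' ⬝ᵥ Hbar.mulVec Δu' + Δu ⬝ᵥ Hbar.mulVec Δu) :
    letI Δpplus : Fin m → ℝ := Δp + ρ • A.mulVec Δu
    Δu ⬝ᵥ Hbar.mulVec Δu + 1 / ρ * (Δpplus ⬝ᵥ Δpplus) ≤
      Δu' ⬝ᵥ Hbar.mulVec Δu' + 1 / ρ * (Δp ⬝ᵥ Δp) := by
  set v := A.mulVec Δu with hv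
  have hs : (0:ℝ) ≤ v ⬝ᵥ v := by
    apply Finset.sum_nonneg
    intro i _
    exact mul_self_nonneg _
  have h1 : Δu ⬝ᵥ Hbar.mulVec Δu = Δu ⬝ᵥ H.mulVec Δu - γ * (v ⬝ᵥ v) := by
    rw [hHbar, Matrix.sub_mulVec, dotProduct_sub, Matrix.smul_mulVec,
      dotProduct_smul, ← Matrix.mulVec_mulVec, Matrix.mulVec_transpose,
      dotProduct_comm Δu ((A *ᵥ Δu) ᵥ* A), ← Matrix.dotProduct_mulVec, smul_eq_mul]
  have h2 : (Δp + ρ • v) ⬝ᵥ (Δp + ρ • v) =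
      Δp ⬝ᵥ Δp + 2 * ρ * (Δp ⬝ᵥ v) + ρ ^ 2 * (v ⬝ᵥ v) := by
    rw [dotProduct_add, add_dotProduct, add_dotProduct, dotProduct_smul,
      smul_dotProduct, smul_dotProduct, dotProduct_smul, dotProduct_comm v Δp]
    simp only [smul_eq_mul]
    ring
  have hργ : ρ ≤ 2 * γ := le_trans hρ1 hρ2
  show Δu ⬝ᵥ Hbar *ᵥ Δu + 1 / ρ * ((Δp + ρ • v) ⬝ᵥ (Δp + ρ • v)) ≤
      Δu' ⬝ᵥ Hbar *ᵥ Δu' + 1 / ρ * (Δp ⬝ᵥ Δp)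
  rw [h2]
  have hexp : 1 / ρ * (Δp ⬝ᵥ Δp + 2 * ρ * (Δp ⬝ᵥ v) + ρ ^ 2 * (v ⬝ᵥ v)) =
      1 / ρ * (Δp ⬝ᵥ Δp) + 2 * (Δp ⬝ᵥ v) + ρ * (v ⬝ᵥ v) := by
    field_simp
  rw [hexp]
  have hmul : ρ * (v ⬝ᵥ v) ≤ 2 * γ * (v ⬝ᵥ v) :=
    mul_le_mul_of_nonneg_right hργ hs
  linarith [hkey, h1]
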